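/- Let M ∈ SL(2, ℤ) be hyperbolic with irrational eigenvector slopes e₁ and e₂ (i.e., (1, e₁) and (1, e₂) are eigenvectors). Then the period of the continued fraction expansion of e₁, viewed as a cyclic sequence, is the reverse of the period of the continued fraction expansion of e₂. -/

import Mathlib

/-- The sequence of complete quotients of the continued fraction algorithm. -/
noncomputable def cq (x : ℝ) : ℕ → ℝ
  | 0 => x
  | n + 1 => (Int.fract (cq x n))⁻¹

/-- The `n`-th digit of the continued fraction expansion of `x`. -/
noncomputable def cfDigit (x : ℝ) (n : ℕ) : ℤ := ⌊cq x n⌋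

/-- `b` is a period of the (eventually periodic) continued fraction of `x`. -/
def IsCFPeriod (x : ℝ) (b : List ℤ) : Prop :=
  b ≠ [] ∧ ∃ N : ℕ, ∀ i : ℕ, cfDigit x (N + i) = b.getD (i % b.length) 0

/-- `b` is a minimal period of the continued fraction of `x`. -/
def IsMinCFPeriod (x : ℝ) (b : List ℤ) : Prop :=
  IsCFPeriod x b ∧ ∀ c : List ℤ, IsCFPeriod x c → b.length ≤ c.length

/-! ### basic lemmas on cq -/

lemma cq_zero (x : ℝ) : cq x 0 = x := rfl

lemma cq_succ (x : ℝ) (n : ℕ) : cq x (n+1) = (Int.fract (cq x n))⁻¹ := rfl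

lemma irrational_fract {x : ℝ} (h : Irrational x) : Irrational (Int.fract x) := by
  unfold Int.fract
  exact (h.sub_intCast _)

lemma cq_irrational {x : ℝ} (h : Irrational x) : ∀ n, Irrational (cq x n)
  | 0 => h
  | (n+1) => by
      rw [cq_succ]
      exact (irrational_fract (cq_irrational h n)).inv

lemma fract_pos {x : ℝ} (h : Irrational x) : 0 < Int.fract x := by
  rcases lt_or_eq_of_le (Int.fract_nonneg x) with h' | h'
  · exact h'
  · exfalso
    have : x = (⌊x⌋ : ℝ) := by
      unfold Int.fract at h'
      linarith [h'.symm]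
    exact h ⟨(⌊x⌋ : ℚ), by push_cast; exact this.symm⟩

lemma cq_one_lt {x : ℝ} (h : Irrational x) (n : ℕ) : 1 < cq x (n+1) := by
  rw [cq_succ]
  have hi := cq_irrational h n
  have h0 := fract_pos hi
  have h1 := Int.fract_lt_one (cq x n)
  exact (one_lt_inv₀ h0).mpr h1

lemma cfDigit_pos {x : ℝ} (h : Irrational x) (n : ℕ) : 1 ≤ cfDigit x (n+1) := by
  unfold cfDigit
  exact Int.le_floor.mpr (by exact_mod_cast (cq_one_lt h n).le)

/-- key recurrence: `cq x n = ⌊cq x n⌋ + (cq x (n+1))⁻¹`. -/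
lemma cq_eq_digit_add_inv {x : ℝ} (h : Irrational x) (n : ℕ) :
    cq x n = (cfDigit x n : ℝ) + (cq x (n+1))⁻¹ := by
  rw [cq_succ, inv_inv, cfDigit]
  have : Int.fract (cq x n) = cq x n - ⌊cq x n⌋ := rfl
  linarith [this]

lemma cq_add (x : ℝ) (m : ℕ) : ∀ n, cq (cq x m) n = cq x (m + n)
  | 0 => rfl
  | (n+1) => by rw [cq_succ, cq_add x m n, ← cq_succ]; ring_nf

lemma cfDigit_add (x : ℝ) (m n : ℕ) : cfDigit (cq x m) n = cfDigit x (m + n) := by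
  unfold cfDigit; rw [cq_add]

section EqOfDigits

lemma prod_two_lt {x : ℝ} (hx : Irrational x) (n : ℕ) :
    2 < cq x (n+1) * cq x (n+2) := by
  have h1 := cq_one_lt hx n
  have h2 := cq_one_lt hx (n+1)
  have hd := cq_eq_digit_add_inv hx (n+1)
  have hdig : (1:ℝ) ≤ (cfDigit x (n+1) : ℝ) := by exact_mod_cast cfDigit_pos hx n
  have hpos : (0:ℝ) < cq x (n+2) := by linarith
  have : 1 + (cq x (n+2))⁻¹ ≤ cq x (n+1) := by rw [hd]; linarith
  have h3 : (1 + (cq x (n+2))⁻¹) * cq x (n+2) ≤ cq x (n+1) * cq x (n+2) := by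
    apply mul_le_mul_of_nonneg_right this hpos.le
  have h4 : (1 + (cq x (n+2))⁻¹) * cq x (n+2) = cq x (n+2) + 1 := by
    field_simp
  nlinarith

theorem eq_of_digits_eq {x y : ℝ} (hx : Irrational x) (hy : Irrational y)
    (hd : ∀ n, cfDigit x n = cfDigit y n) : x = y := by
  set d : ℕ → ℝ := fun n => |cq x n - cq y n| with hddef
  have hda : ∀ n, 0 < cq x (n+1) ∧ 0 < cq y (n+1) := fun n =>
    ⟨lt_trans one_pos (cq_one_lt hx n), lt_trans one_pos (cq_one_lt hy n)⟩
  have hrec : ∀ n, d n * (cq x (n+1) * cq y (n+1)) = d (n+1) := by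
    intro n
    have e1 := cq_eq_digit_add_inv hx n
    have e2 := cq_eq_digit_add_inv hy n
    have hne1 := (hda n).1.ne'
    have hne2 := (hda n).2.ne'
    have : cq x n - cq y n = (cq y (n+1) - cq x (n+1)) / (cq x (n+1) * cq y (n+1)) := by
      rw [e1, e2, hd n]
      field_simp
      ring
    rw [hddef]
    simp only []
    rw [this, abs_div, abs_of_pos (mul_pos (hda n).1 (hda n).2), div_mul_cancel₀, abs_sub_comm]
    exact (mul_pos (hda n).1 (hda n).2).ne'
  have hlt1 : ∀ n, d n < 1 := by
    intro n
    have : cq x n - cq y n = Int.fract (cq x n) - Int.fract (cq y n) := by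
      unfold Int.fract
      have : ⌊cq x n⌋ = ⌊cq y n⌋ := hd n
      rw [this]; ring
    rw [hddef]; simp only []
    rw [this]
    rw [abs_sub_lt_iff]
    constructor <;> nlinarith [Int.fract_nonneg (cq x n), Int.fract_lt_one (cq x n),
       Int.fract_nonneg (cq y n), Int.fract_lt_one (cq y n)]
  have hstep : ∀ n, 4 * d n ≤ d (n+2) := by
    intro n
    have r1 := hrec n
    have r2 := hrec (n+1)
    have p1 := prod_two_lt hx n
    have p2 := prod_two_lt hy n
    have hd0 : 0 ≤ d n := abs_nonneg _
    have : d (n+2) = d n * ((cq x (n+1) * cq x (n+2)) * (cq y (n+1) * cq y (n+2))) := by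
      rw [← r2, ← r1]; ring
    rw [this]
    have hAB : 4 < cq x (n + 1) * cq x (n + 2) * (cq y (n + 1) * cq y (n + 2)) := by nlinarith
    nlinarith [mul_le_mul_of_nonneg_left hAB.le hd0]
  have hm : ∀ m, 4^m * d 0 ≤ d (2*m) := by
    intro m
    induction m with
    | zero => simp
    | succ k ih =>
      have := hstep (2*k)
      have h4 : (0:ℝ) ≤ 4^k := by positivity
      have : 4 * (4^k * d 0) ≤ d (2*k+2) := by nlinarith [abs_nonneg (cq x (2*k) - cq y (2*k))]
      calc 4^(k+1) * d 0 = 4 * (4^k * d 0) := by ring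
        _ ≤ d (2*k+2) := this
        _ = d (2*(k+1)) := by ring_nf
  have hd0 : d 0 ≤ 0 := by
    by_contra hpos
    push_neg at hpos
    obtain ⟨m, hm'⟩ := pow_unbounded_of_one_lt (R := ℝ) (1/ d 0) (by norm_num : (1:ℝ) < 4)
    have := hm m
    have := hlt1 (2*m)
    have h4 : (0:ℝ) < 4^m := by positivity
    rw [div_lt_iff₀ hpos] at hm'
    nlinarith
  have : d 0 = 0 := le_antisymm hd0 (abs_nonneg _)
  have := abs_eq_zero.mp this
  exact sub_eq_zero.mp this
end EqOfDigits


abbrev Mat2 := Matrix (Fin 2) (Fin 2) ℤ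

noncomputable def act (g : Mat2) (x : ℝ) : ℝ :=
  ((g 0 0 : ℝ) * x + g 0 1) / ((g 1 0 : ℝ) * x + g 1 1)

lemma lin_eq_zero {x : ℝ} (h : Irrational x) {a b : ℤ} (hab : (a:ℝ) * x + b = 0) :
    a = 0 ∧ b = 0 := by
  by_cases ha : a = 0
  · refine ⟨ha, ?_⟩
    rw [ha] at hab; push_cast at hab; simpa using hab
  · exfalso
    have hx : x = ((-b / a : ℚ) : ℝ) := by
      have ha' : (a:ℝ) ≠ 0 := Int.cast_ne_zero.mpr ha
      push_cast
      field_simp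
      linarith
    exact h ⟨_, hx.symm⟩

lemma denom_ne {g : Mat2} {x : ℝ} (h : Irrational x) (hg : g.det ≠ 0) :
    ((g 1 0 : ℝ) * x + g 1 1) ≠ 0 := by
  intro hc
  obtain ⟨h1, h2⟩ := lin_eq_zero h hc
  apply hg
  rw [Matrix.det_fin_two, h1, h2]
  ring

lemma numer_ne {g : Mat2} {x : ℝ} (h : Irrational x) (hg : g.det ≠ 0) :
    ((g 0 0 : ℝ) * x + g 0 1) ≠ 0 := by
  intro hc
  obtain ⟨h1, h2⟩ := lin_eq_zero h hc
  apply hg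
  rw [Matrix.det_fin_two, h1, h2]
  ring

lemma act_irrational {g : Mat2} {x : ℝ} (h : Irrational x) (hg : g.det ≠ 0) :
    Irrational (act g x) := by
  rw [Irrational]
  rintro ⟨q, hq⟩
  have hD := denom_ne h hg
  have hq' : (q : ℝ) * ((g 1 0 : ℝ) * x + g 1 1) = (g 0 0 : ℝ) * x + g 0 1 := by
    rw [hq, act]
    have hD' : (x * (g 1 0 : ℝ) + g 1 1) ≠ 0 := by rwa [mul_comm] at hD
    field_simp
  have key : ((((g 0 0 : ℚ)) - q * g 1 0 : ℚ) : ℝ) * x = (((q * g 1 1 - g 0 1 : ℚ)) : ℝ) := by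
    push_cast
    ring_nf
    ring_nf at hq'
    linarith
  by_cases hα : ((g 0 0 : ℚ)) - q * g 1 0 = 0
  · rw [hα] at key
    push_cast at key
    simp at key
    have hβ : (q * g 1 1 - g 0 1 : ℚ) = 0 := by exact_mod_cast key.symm
    apply hg
    have e1 : (g 0 0 : ℚ) = q * g 1 0 := by linarith [hα]
    have e2 : (g 0 1 : ℚ) = q * g 1 1 := by linarith [hβ]
    have : ((g.det : ℤ) : ℚ) = 0 := by
      rw [Matrix.det_fin_two]
      push_cast
      rw [e1, e2]
      ring
    exact_mod_cast this
  · apply h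
    refine ⟨(q * g 1 1 - g 0 1) / ((g 0 0 : ℚ) - q * g 1 0), ?_⟩
    have hα' : ((((g 0 0 : ℚ)) - q * g 1 0 : ℚ) : ℝ) ≠ 0 := by exact_mod_cast hα
    push_cast
    push_cast at key hα'
    field_simp
    linarith

lemma act_one {x : ℝ} : act 1 x = x := by
  simp [act, Matrix.one_apply]

lemma act_smul_one {x : ℝ} {d : ℤ} (hd : d ≠ 0) : act (d • (1 : Mat2)) x = x := by
  have hd' : (d : ℝ) ≠ 0 := Int.cast_ne_zero.mpr hd
  simp [act, Matrix.smul_apply, Matrix.one_apply]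
  field_simp

lemma div_div_div_same {a b c : ℝ} (hc : c ≠ 0) : (a/c)/(b/c) = a/b := by
  by_cases hb : b = 0
  · simp [hb]
  · field_simp

lemma act_mul {g h : Mat2} {x : ℝ} (hx : Irrational x) (hg : g.det ≠ 0) (hh : h.det ≠ 0) :
    act (g * h) x = act g (act h x) := by
  have hD1 : ((h 1 0 : ℝ) * x + h 1 1) ≠ 0 := denom_ne hx hh
  have he : ∀ i j, (((g*h) i j : ℤ) : ℝ) = (g i 0 : ℝ) * h 0 j + (g i 1 : ℝ) * h 1 j := by
    intro i j
    rw [Matrix.mul_apply, Fin.sum_univ_two]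
    push_cast
    ring
  have key : ∀ p : Fin 2, (g p 0 : ℝ) * act h x + g p 1
      = (((g*h) p 0 : ℝ) * x + ((g*h) p 1 : ℝ)) / ((h 1 0 : ℝ) * x + h 1 1) := by
    intro p
    rw [he p 0, he p 1]
    simp only [act]
    have hD1' : (x * (h 1 0 : ℝ) + h 1 1) ≠ 0 := by rwa [mul_comm] at hD1
    field_simp
    ring
  simp only [act]
  have k0 := key 0
  have k1 := key 1
  simp only [act] at k0 k1
  rw [k0, k1, div_div_div_same hD1]

lemma adj_det_ne {g : Mat2} (hg : g.det ≠ 0) : g.adjugate.det ≠ 0 := by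
  rw [Matrix.det_adjugate]
  simpa using hg

lemma act_adj_left {g : Mat2} {x : ℝ} (hx : Irrational x) (hg : g.det ≠ 0) :
    act g.adjugate (act g x) = x := by
  rw [← act_mul hx (adj_det_ne hg) hg, Matrix.adjugate_mul, act_smul_one hg]

lemma act_adj_right {g : Mat2} {x : ℝ} (hx : Irrational x) (hg : g.det ≠ 0) :
    act g (act g.adjugate x) = x := by
  rw [← act_mul hx hg (adj_det_ne hg), Matrix.mul_adjugate, act_smul_one hg]

lemma fixed_iff {g : Mat2} {x : ℝ} (hx : Irrational x) (hg : g.det ≠ 0) :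
    act g x = x ↔ (g 1 0 : ℝ) * x^2 + ((g 1 1 : ℝ) - g 0 0) * x - g 0 1 = 0 := by
  have hD := denom_ne hx hg
  rw [act, div_eq_iff hD]
  constructor <;> intro hh <;> linear_combination -hh

/-! ### word matrices -/

def dm (a : ℤ) : Mat2 := !![a, 1; 1, 0]

def wm : List ℤ → Mat2
  | [] => 1
  | a :: t => dm a * wm t

@[simp] lemma dm_det (a : ℤ) : (dm a).det = -1 := by
  simp [dm, Matrix.det_fin_two_of]

lemma wm_det_ne : ∀ w : List ℤ, (wm w).det ≠ 0
  | [] => by simp [wm]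
  | a :: t => by
      rw [wm, Matrix.det_mul, dm_det]
      simpa using wm_det_ne t

lemma act_dm {a : ℤ} {t : ℝ} (ht : t ≠ 0) : act (dm a) t = (a:ℝ) + t⁻¹ := by
  simp [act, dm]
  field_simp

lemma act_dm_mem {a : ℤ} {t : ℝ} (ht : 1 < t) :
    (a:ℝ) < act (dm a) t ∧ act (dm a) t < a + 1 := by
  rw [act_dm (by linarith)]
  have h1 : 0 < t⁻¹ := by positivity
  have h2 : t⁻¹ < 1 := by
    rw [inv_lt_one_iff₀]; right; exact ht
  constructor <;> linarith

lemma act_wm_gt_one : ∀ w : List ℤ, (∀ a ∈ w, 1 ≤ a) → ∀ t : ℝ, 1 < t → Irrational t →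
    1 < act (wm w) t
  | [], _, t, ht, _ => by rwa [wm, act_one]
  | a :: l, hw, t, ht, hti => by
      have hl : 1 < act (wm l) t :=
        act_wm_gt_one l (fun b hb => hw b (List.mem_cons_of_mem a hb)) t ht hti
      have ha : 1 ≤ a := hw a (List.mem_cons_self)
      rw [wm, act_mul hti (by simp [dm, Matrix.det_fin_two_of]) (wm_det_ne l)]
      have ha' : (1:ℝ) ≤ (a:ℝ) := by exact_mod_cast ha
      linarith [(act_dm_mem (a := a) hl).1]

/-- digits of `act (wm w) t` start with `w` (for `t > 1`), and the tail is `t`. -/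
lemma digits_prefix {t : ℝ} (ht : 1 < t) (hti : Irrational t) :
    ∀ w : List ℤ, (∀ a ∈ w, 1 ≤ a) →
      (∀ j < w.length, cfDigit (act (wm w) t) j = w.getD j 0) ∧
        cq (act (wm w) t) w.length = t
  | [] => by intro _; constructor
             · intro j hj; simp at hj
             · rw [wm, act_one]; rfl
  | a :: l => by
      intro hw
      have hl := digits_prefix ht hti l (fun b hb => hw b (List.mem_cons_of_mem a hb))
      have ha : 1 ≤ a := hw a (List.mem_cons_self)
      have hy : 1 < act (wm l) t := act_wm_gt_one l (fun b hb => hw b (List.mem_cons_of_mem a hb)) t ht hti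
      have hx : act (wm (a :: l)) t = (a:ℝ) + (act (wm l) t)⁻¹ := by
        rw [wm, act_mul hti (by simp [dm, Matrix.det_fin_two_of]) (wm_det_ne l),
          act_dm (by linarith)]
      -- floor of x is a, and cq x 1 = act (wm l) t
      have hy0 : (0:ℝ) < (act (wm l) t)⁻¹ := by positivity
      have hy1 : (act (wm l) t)⁻¹ < 1 := by rw [inv_lt_one_iff₀]; right; exact hy
      have hfl : ⌊act (wm (a :: l)) t⌋ = a := by
        rw [hx, add_comm]
        rw [Int.floor_add_intCast]
        rw [Int.floor_eq_zero_iff.mpr ⟨hy0.le, hy1⟩]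
        simp
      have hfr : Int.fract (act (wm (a :: l)) t) = (act (wm l) t)⁻¹ := by
        unfold Int.fract
        rw [hfl, hx]
        push_cast
        ring
      have hcq1 : cq (act (wm (a :: l)) t) 1 = act (wm l) t := by
        rw [cq_succ]
        rw [show cq (act (wm (a :: l)) t) 0 = act (wm (a :: l)) t from rfl, hfr, inv_inv]
      refine ⟨?_, ?_⟩
      · intro j hj
        match j with
        | 0 => simpa [cfDigit, cq_zero] using hfl
        | (j+1) =>
            have : cfDigit (act (wm (a :: l)) t) (j+1) = cfDigit (act (wm l) t) j := by
              rw [← hcq1, cfDigit_add]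
              ring_nf
            rw [this]
            simp only [List.length_cons] at hj
            rw [hl.1 j (by omega)]
            rfl
      · have : cq (act (wm (a :: l)) t) (l.length + 1) = cq (act (wm l) t) l.length := by
          rw [← hcq1, cq_add]
          ring_nf
        simp only [List.length_cons]
        rw [this, hl.2]

/-- a fixed point `> 1` of a positive word matrix is purely periodic. -/
lemma pure_periodic {t : ℝ} (ht : 1 < t) (hti : Irrational t) {w : List ℤ}
    (hw : ∀ a ∈ w, 1 ≤ a) (hne : w ≠ []) (hfix : t = act (wm w) t) :
    ∀ i, cfDigit t i = w.getD (i % w.length) 0 := by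
  have hk : 0 < w.length := List.length_pos_iff.mpr hne
  have hpre := digits_prefix ht hti w hw
  have htail : cq t w.length = t := by
    conv_lhs => rw [hfix]
    exact hpre.2
  have hmul : ∀ q : ℕ, cq t (q * w.length) = t := by
    intro q
    induction q with
    | zero => rw [Nat.zero_mul]; rfl
    | succ m ih =>
        have : cq t ((m+1) * w.length) = cq (cq t (m * w.length)) w.length := by
          rw [cq_add]; ring_nf
        rw [this, ih, htail]
  intro i
  have h1 : cfDigit t i = cfDigit (cq t (i / w.length * w.length)) (i % w.length) := by
    rw [cfDigit_add]; congr 1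
    conv_lhs => rw [← Nat.div_add_mod i w.length]
    ring
  rw [h1, hmul]
  conv_lhs => rw [hfix]
  exact hpre.1 _ (Nat.mod_lt i hk)

/-! ### transpose and reverse -/

lemma wm_append_singleton (a : ℤ) : ∀ l : List ℤ, wm (l ++ [a]) = wm l * dm a
  | [] => by simp [wm]
  | b :: t => by
      show wm (b :: (t ++ [a])) = _
      rw [wm, wm_append_singleton a t, wm, mul_assoc]

lemma dm_transpose (a : ℤ) : (dm a).transpose = dm a := by
  unfold dm
  ext i j
  fin_cases i <;> fin_cases j <;> simp [Matrix.transpose_apply]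

lemma wm_reverse : ∀ l : List ℤ, wm l.reverse = (wm l).transpose
  | [] => by simp [wm]
  | a :: t => by
      rw [List.reverse_cons, wm_append_singleton, wm_reverse t, wm,
        Matrix.transpose_mul, dm_transpose]

/-! ### the periodic tail of an eventually periodic CF -/


lemma tail_fixed {x : ℝ} {b : List ℤ} (hx : Irrational x) (hb : IsCFPeriod x b) :
    ∃ N : ℕ, 0 < N ∧ (∀ i, cfDigit x (N + i) = b.getD (i % b.length) 0) ∧
      (∀ a ∈ b, 1 ≤ a) ∧ 1 < cq x N ∧ cq x N = act (wm b) (cq x N) := by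
  obtain ⟨hbne, N0, hN0⟩ := hb
  have hk : 0 < b.length := List.length_pos_iff.mpr hbne
  set N := N0 + b.length with hN
  have hNpos : 0 < N := by omega
  have hdig : ∀ i, cfDigit x (N + i) = b.getD (i % b.length) 0 := by
    intro i
    have : N + i = N0 + (b.length + i) := by omega
    rw [this, hN0]
    congr 1
    exact Nat.add_mod_left _ _
  have hpos : ∀ a ∈ b, 1 ≤ a := by
    intro a ha
    obtain ⟨j, hj, hja⟩ := List.mem_iff_getElem.mp ha
    have h1 : b.getD (j % b.length) 0 = a := by
      rw [Nat.mod_eq_of_lt hj, List.getD_eq_getElem b 0 hj, hja]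
    have h2 := hdig j
    rw [h1] at h2
    have : N + j = (N - 1 + j) + 1 := by omega
    rw [this] at h2
    rw [← h2]
    exact cfDigit_pos hx _
  set y := cq x N with hy
  have hyirr : Irrational y := cq_irrational hx N
  have hygt : 1 < y := by
    rw [hy, hN, show N0 + b.length = (N0 + b.length - 1) + 1 by omega]
    exact cq_one_lt hx _
  have hydig : ∀ i, cfDigit y i = b.getD (i % b.length) 0 := by
    intro i; rw [hy, cfDigit_add]; exact hdig i
  -- the tail repeats: cq y (b.length) has the same digits as y
  have heq : cq y b.length = y := by
    apply eq_of_digits_eq (cq_irrational hyirr _) hyirr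
    intro n
    rw [cfDigit_add, hydig, hydig]
    congr 1
    exact Nat.add_mod_left _ _
  -- telescoping: y = act (wm (first digits)) (cq y k)
  have htel : ∀ (z : ℝ), Irrational z → ∀ n, z = act (wm ((List.range n).map (cfDigit z))) (cq z n) := by
    intro z hz n
    induction n generalizing z with
    | zero => rw [List.range_zero, List.map_nil, wm, act_one]; rfl
    | succ m ih =>
        have hz1 : Irrational (cq z 1) := cq_irrational hz 1
        have hgt : 1 < cq z 1 := cq_one_lt hz 0
        have hrange : (List.range (m+1)).map (cfDigit z)
            = cfDigit z 0 :: (List.range m).map (cfDigit (cq z 1)) := by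
          rw [List.range_succ_eq_map, List.map_cons, List.map_map]
          congr 1
          apply List.map_congr_left
          intro i _
          simp [cfDigit_add, Nat.add_comm]
        rw [hrange, wm, act_mul (cq_irrational hz (m+1)) (by simp [dm, Matrix.det_fin_two_of]) (wm_det_ne _)]
        have htc : cq (cq z 1) m = cq z (m+1) := by rw [cq_add]; ring_nf
        rw [← htc, ← ih (cq z 1) hz1]
        rw [act_dm (by positivity)]
        exact cq_eq_digit_add_inv hz 0
  have hlist : (List.range b.length).map (cfDigit y) = b := by
    apply List.ext_getElem
    · simp
    · intro j h1 h2
      simp only [List.getElem_map, List.getElem_range]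
      rw [← List.getD_eq_getElem b 0 h2, ← Nat.mod_eq_of_lt h2, ← hydig j,
        Nat.mod_eq_of_lt h2]
  have := htel y hyirr b.length
  rw [hlist, heq] at this
  exact ⟨N, hNpos, hdig, hpos, hygt, this⟩

/-! ### the tail-equivalence relation -/

def relCF (x y : ℝ) : Prop := ∃ n m, cq x n = cq y m

lemma relCF.refl (x : ℝ) : relCF x x := ⟨0, 0, rfl⟩

lemma relCF.symm {x y : ℝ} (h : relCF x y) : relCF y x := by
  obtain ⟨n, m, h⟩ := h; exact ⟨m, n, h.symm⟩

lemma relCF.trans {x y z : ℝ} (h1 : relCF x y) (h2 : relCF y z) : relCF x z := by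
  obtain ⟨n, m, h1⟩ := h1
  obtain ⟨m', l, h2⟩ := h2
  rcases le_total m m' with hm | hm
  · refine ⟨n + (m' - m), l, ?_⟩
    rw [← cq_add, h1, cq_add]
    rw [show m + (m' - m) = m' from by omega, h2]
  · refine ⟨n, l + (m - m'), ?_⟩
    rw [← cq_add, ← h2, cq_add]
    rw [show m' + (m - m') = m from by omega, h1]

lemma rel_tail (x : ℝ) (n : ℕ) : relCF x (cq x n) := ⟨n, 0, rfl⟩

lemma rel_add_int (x : ℝ) (n : ℤ) : relCF (x + n) x := by
  refine ⟨1, 1, ?_⟩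
  rw [cq_succ, cq_succ]
  show (Int.fract (x + n))⁻¹ = (Int.fract x)⁻¹
  rw [Int.fract_add_intCast]

lemma rel_int_add (x : ℝ) (n : ℤ) : relCF ((n:ℝ) + x) x := by
  rw [add_comm]; exact rel_add_int x n

lemma rel_inv_pos {x : ℝ} (hx : Irrational x) (hpos : 0 < x) : relCF x⁻¹ x := by
  rcases lt_or_gt_of_ne (fun h : x = 1 => hx ⟨1, by push_cast; exact h.symm⟩) with h1 | h1
  · -- 0 < x < 1 : cq x 1 = x⁻¹
    refine ⟨0, 1, ?_⟩
    show x⁻¹ = (Int.fract x)⁻¹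
    rw [Int.fract_eq_self.mpr ⟨hpos.le, h1⟩]
  · -- x > 1 : cq x⁻¹ 1 = x
    refine ⟨1, 0, ?_⟩
    show (Int.fract x⁻¹)⁻¹ = x
    have h2 : 0 < x⁻¹ := by positivity
    have h3 : x⁻¹ < 1 := by rw [inv_lt_one_iff₀]; right; exact h1
    rw [Int.fract_eq_self.mpr ⟨h2.le, h3⟩, inv_inv]

lemma rel_neg {x : ℝ} (hx : Irrational x) : relCF (-x) x := by
  set f := Int.fract x with hf
  have hfi : Irrational f := irrational_fract hx
  have hf0 : 0 < f := fract_pos hx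
  have hf1 : f < 1 := Int.fract_lt_one x
  set η := f⁻¹ with heta
  have hη1 : 1 < η := (one_lt_inv₀ hf0).mpr hf1
  have hηi : Irrational η := hfi.inv
  -- cq x 1 = η
  have e1 : relCF x η := ⟨1, 0, rfl⟩
  -- cq (-x) 1 = (1 - f)⁻¹
  have e2 : relCF (-x) ((1 - f)⁻¹) := by
    refine ⟨1, 0, ?_⟩
    show (Int.fract (-x))⁻¹ = (1 - f)⁻¹
    rw [Int.fract_neg (ne_of_gt hf0)]
  -- (1 - f)⁻¹ = 1 + (η - 1)⁻¹
  have e3 : (1 - f)⁻¹ = (η - 1)⁻¹ + (1:ℤ) := by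
    push_cast
    have hfne : f ≠ 0 := ne_of_gt hf0
    have : η - 1 = (1 - f) / f := by rw [heta]; field_simp
    rw [this]
    have h1f : (1:ℝ) - f ≠ 0 := by intro h; nlinarith
    field_simp
    ring
  have e4 : relCF ((1 - f)⁻¹) ((η - 1)⁻¹) := by rw [e3]; exact rel_add_int _ 1
  have e5 : relCF ((η - 1)⁻¹) (η - 1) := by
    apply rel_inv_pos _ (by linarith)
    have := hηi.sub_intCast 1
    push_cast at this
    exact this
  have e6 : relCF (η - 1) η := by
    have h := rel_add_int η (-1)
    have heqq : η + ((-1:ℤ):ℝ) = η - 1 := by push_cast; ring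
    rwa [heqq] at h
  exact ((((e2.trans e4).trans e5).trans e6).trans e1.symm)

lemma rel_inv {x : ℝ} (hx : Irrational x) : relCF x⁻¹ x := by
  rcases lt_or_gt_of_ne hx.ne_zero with hneg | hpos
  · have h1 : relCF ((-x)⁻¹) (-x) := rel_inv_pos hx.neg (by linarith)
    have h2 : relCF (-x) x := rel_neg hx
    have h3 : relCF (-(x⁻¹)) (x⁻¹) := rel_neg hx.inv
    have h4 : (-x)⁻¹ = -(x⁻¹) := by rw [inv_neg]
    rw [h4] at h1
    exact (h3.symm.trans h1).trans h2
  · exact rel_inv_pos hx hpos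

lemma rel_affine {x : ℝ} (hx : Irrational x) {ε c : ℤ} (hε : ε = 1 ∨ ε = -1) :
    relCF ((ε:ℝ) * x + c) x := by
  rcases hε with h | h
  · rw [h]; push_cast; rw [one_mul]; exact rel_add_int x c
  · rw [h]
    push_cast
    have h1 : relCF (-x + c) (-x) := rel_add_int (-x) c
    have h2 := h1.trans (rel_neg hx)
    have h3 : -x + (c:ℝ) = -1 * x + c := by ring
    rwa [h3] at h2

theorem rel_act_aux : ∀ n : ℕ, ∀ g : Mat2, (g 1 0).natAbs ≤ n →
    (g.det = 1 ∨ g.det = -1) → ∀ x : ℝ, Irrational x → relCF (act g x) x := by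
  intro n
  induction n with
  | zero =>
    intro g hg hdet x hx
    have hg10 : g 1 0 = 0 := by omega
    have hdet' : g.det = g 0 0 * g 1 1 := by rw [Matrix.det_fin_two, hg10]; ring
    have hu : g 0 0 = 1 ∨ g 0 0 = -1 := by
      rcases hdet with h | h <;> rw [hdet'] at h
      · exact Int.isUnit_iff.mp (IsUnit.of_mul_eq_one _ h)
      · exact Int.isUnit_iff.mp (IsUnit.of_mul_eq_one (-(g 1 1)) (by rw [mul_neg, h]; norm_num))
    have hv : g 1 1 = 1 ∨ g 1 1 = -1 := by
      rcases hdet with h | h <;> rw [hdet'] at h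
      · exact Int.isUnit_iff.mp (IsUnit.of_mul_eq_one (g 0 0) (by rw [mul_comm] at h; exact h))
      · exact Int.isUnit_iff.mp (IsUnit.of_mul_eq_one (-(g 0 0)) (by rw [mul_neg, mul_comm, h]; norm_num))
    have hact : act g x = ((g 0 0 * g 1 1 : ℤ):ℝ) * x + ((g 0 1 * g 1 1 : ℤ):ℝ) := by
      rw [act, hg10]
      push_cast
      rcases hv with h | h <;> rw [h] <;> push_cast <;> ring_nf <;> field_simp
    rw [hact]
    apply rel_affine hx
    rw [← hdet']
    exact hdet
  | succ n ih =>
    intro g hg hdet x hx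
    by_cases hg10 : g 1 0 = 0
    · exact ih g (by omega) hdet x hx
    · have hgd : g.det ≠ 0 := by rcases hdet with h | h <;> rw [h] <;> norm_num
      set e := g 0 0 / g 1 0 with he
      set r := g 0 0 % g 1 0 with hr
      have hdivmod : g 1 0 * e + r = g 0 0 := Int.mul_ediv_add_emod _ _
      have hrabs : r.natAbs < (g 1 0).natAbs := by
        have h1 : 0 ≤ r := Int.emod_nonneg _ hg10
        have h2 : r < |g 1 0| := by
          rcases lt_or_gt_of_ne hg10 with hneg | hpos
          · have : g 0 0 % g 1 0 = g 0 0 % (-(g 1 0)) := (Int.emod_neg _ _).symm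
            rw [hr, this, abs_of_neg hneg]
            exact Int.emod_lt_of_pos _ (by omega)
          · rw [hr, abs_of_pos hpos]
            exact Int.emod_lt_of_pos _ hpos
        rw [Int.abs_eq_natAbs] at h2
        omega
      set s := g 0 1 - e * g 1 1 with hs
      set W₂ : Mat2 := !![r, s; g 1 0, g 1 1] with hW2
      set W₃ : Mat2 := !![g 1 0, g 1 1; r, s] with hW3
      have hW2e : W₂ 0 0 = r ∧ W₂ 0 1 = s ∧ W₂ 1 0 = g 1 0 ∧ W₂ 1 1 = g 1 1 :=
        ⟨rfl, rfl, rfl, rfl⟩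
      have hW3e : W₃ 0 0 = g 1 0 ∧ W₃ 0 1 = g 1 1 ∧ W₃ 1 0 = r ∧ W₃ 1 1 = s :=
        ⟨rfl, rfl, rfl, rfl⟩
      have hdetW2 : W₂.det = g.det := by
        rw [Matrix.det_fin_two, Matrix.det_fin_two]
        rw [hW2e.1, hW2e.2.1, hW2e.2.2.1, hW2e.2.2.2]
        rw [hs]
        rw [← hdivmod]
        ring
      have hdetW3 : W₃.det = -g.det := by
        rw [Matrix.det_fin_two, Matrix.det_fin_two]
        rw [hW3e.1, hW3e.2.1, hW3e.2.2.1, hW3e.2.2.2]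
        rw [hs, ← hdivmod]
        ring
      have hdetW2' : W₂.det ≠ 0 := by rw [hdetW2]; exact hgd
      have hdetW3' : W₃.det ≠ 0 := by rw [hdetW3]; simpa using hgd
      have hD : ((g 1 0:ℝ) * x + g 1 1) ≠ 0 := denom_ne hx hgd
      have hN2 : ((r:ℝ) * x + s) ≠ 0 := by
        have := numer_ne (g := W₂) hx hdetW2'
        rw [hW2e.1, hW2e.2.1] at this
        exact this
      have hsplit : act g x = act W₂ x + (e:ℝ) := by
        rw [act, act, hW2e.1, hW2e.2.1, hW2e.2.2.1, hW2e.2.2.2]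
        rw [div_add' _ _ _ hD]
        congr 1
        have : (g 0 0 : ℝ) = (g 1 0 : ℝ) * e + r := by exact_mod_cast congrArg (Int.cast : ℤ → ℝ) hdivmod.symm
        rw [this, hs]
        push_cast
        ring
      have hinv : act W₂ x = (act W₃ x)⁻¹ := by
        rw [act, act, hW2e.1, hW2e.2.1, hW2e.2.2.1, hW2e.2.2.2,
          hW3e.1, hW3e.2.1, hW3e.2.2.1, hW3e.2.2.2]
        rw [inv_div]
      have hW3irr : Irrational (act W₃ x) := act_irrational hx hdetW3'
      have hrel3 : relCF (act W₃ x) x := by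
        apply ih W₃ _ _ x hx
        · rw [hW3e.2.2.1]; omega
        · rcases hdet with h | h
          · right; rw [hdetW3, h]
          · left; rw [hdetW3, h]; norm_num
      have hrel2 : relCF (act W₂ x) (act W₃ x) := by
        rw [hinv]; exact rel_inv hW3irr
      have hrel1 : relCF (act g x) (act W₂ x) := by
        rw [hsplit]; exact rel_add_int _ e
      exact (hrel1.trans hrel2).trans hrel3

theorem rel_act {g : Mat2} (hdet : g.det = 1 ∨ g.det = -1) {x : ℝ} (hx : Irrational x) :
    relCF (act g x) x :=
  rel_act_aux (g 1 0).natAbs g le_rfl hdet x hx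

/-! ### entries of word matrices -/

lemma wm_cons (a : ℤ) (t : List ℤ) :
    wm (a :: t) 0 0 = a * wm t 0 0 + wm t 1 0 ∧
    wm (a :: t) 0 1 = a * wm t 0 1 + wm t 1 1 ∧
    wm (a :: t) 1 0 = wm t 0 0 ∧ wm (a :: t) 1 1 = wm t 0 1 := by
  rw [wm]
  refine ⟨?_, ?_, ?_, ?_⟩ <;>
    · rw [Matrix.mul_apply, Fin.sum_univ_two]
      simp [dm]

lemma wm_nil : wm [] 0 0 = 1 ∧ wm [] 0 1 = 0 ∧ wm [] 1 0 = 0 ∧ wm [] 1 1 = 1 := by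
  rw [wm]
  refine ⟨?_, ?_, ?_, ?_⟩ <;> simp [Matrix.one_apply]

lemma wm_pos : ∀ w : List ℤ, (∀ a ∈ w, 1 ≤ a) → w ≠ [] →
    1 ≤ wm w 0 0 ∧ 1 ≤ wm w 0 1 ∧ 1 ≤ wm w 1 0 ∧ 0 ≤ wm w 1 1 ∧
    wm w 0 1 ≤ wm w 0 0 ∧ wm w 1 1 ≤ wm w 1 0 ∧
    1 ≤ wm w 0 0 + wm w 1 0 - wm w 0 1 - wm w 1 1 := by
  intro w
  induction w with
  | nil => intro _ h; exact absurd rfl h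
  | cons a t iht =>
    intro hpos _
    have ha : 1 ≤ a := hpos a (List.mem_cons_self)
    have hc := wm_cons a t
    rcases t with _ | ⟨b, t'⟩
    · rw [hc.1, hc.2.1, hc.2.2.1, hc.2.2.2, wm_nil.1, wm_nil.2.1, wm_nil.2.2.1, wm_nil.2.2.2]
      omega
    · have iht' := iht (fun x hx => hpos x (List.mem_cons_of_mem a hx)) (by simp)
      obtain ⟨p1, p2, p3, p4, p5, p6, p7⟩ := iht'
      rw [hc.1, hc.2.1, hc.2.2.1, hc.2.2.2]
      have h1 : 0 ≤ a * (wm (b :: t') 0 0 - wm (b :: t') 0 1) :=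
        mul_nonneg (by omega) (by omega)
      have h2 : wm (b :: t') 0 1 ≤ a * wm (b :: t') 0 1 := le_mul_of_one_le_left (by omega) ha
      have h3 : wm (b :: t') 0 0 ≤ a * wm (b :: t') 0 0 := le_mul_of_one_le_left (by omega) ha
      have h5 : 0 ≤ a * wm (b :: t') 0 1 := by nlinarith
      constructor
      · nlinarith
      refine ⟨by omega, by omega, by omega, by nlinarith, by omega, by nlinarith⟩

lemma wm_det_pm : ∀ w : List ℤ, (wm w).det = 1 ∨ (wm w).det = -1
  | [] => by left; simp [wm]
  | a :: t => by
      rw [wm, Matrix.det_mul, dm_det]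
      rcases wm_det_pm t with h | h <;> rw [h] <;> [right; left] <;> norm_num

/-- telescoping: `x = act (wm (first n digits)) (cq x n)`. -/
lemma cq_telescope {x : ℝ} (hx : Irrational x) (n : ℕ) :
    x = act (wm ((List.range n).map (cfDigit x))) (cq x n) := by
  induction n generalizing x with
  | zero => rw [List.range_zero, List.map_nil, wm, act_one]; rfl
  | succ m ih =>
      have hz1 : Irrational (cq x 1) := cq_irrational hx 1
      have hgt : 1 < cq x 1 := cq_one_lt hx 0
      have hrange : (List.range (m+1)).map (cfDigit x)
          = cfDigit x 0 :: (List.range m).map (cfDigit (cq x 1)) := by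
        rw [List.range_succ_eq_map, List.map_cons, List.map_map]
        congr 1
        apply List.map_congr_left
        intro i _
        simp [cfDigit_add, Nat.add_comm]
      rw [hrange, wm, act_mul (cq_irrational hx (m+1)) (by simp [dm, Matrix.det_fin_two_of])
        (wm_det_ne _)]
      have htc : cq (cq x 1) m = cq x (m+1) := by rw [cq_add]; ring_nf
      rw [← htc, ← ih hz1]
      rw [act_dm (by positivity)]
      exact cq_eq_digit_add_inv hx 0

/-! ### quadratic equations -/

lemma quad_prop {x w : ℝ} (hx : Irrational x) {a b c a' b' c' : ℤ} (ha : a ≠ 0) (ha' : a' ≠ 0)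
    (h1 : (a:ℝ) * x^2 + b * x + c = 0) (h2 : (a':ℝ) * x^2 + b' * x + c' = 0)
    (h3 : (a:ℝ) * w^2 + b * w + c = 0) : (a':ℝ) * w^2 + b' * w + c' = 0 := by
  have hlin : ((a' * b - a * b' : ℤ):ℝ) * x + ((a' * c - a * c' : ℤ):ℝ) = 0 := by
    push_cast
    linear_combination (a':ℝ) * h1 - (a:ℝ) * h2
  obtain ⟨k1, k2⟩ := lin_eq_zero hx hlin
  have k1' : (a':ℝ) * b = a * b' := by exact_mod_cast congrArg (Int.cast : ℤ → ℝ) (by omega : a' * b = a * b')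
  have k2' : (a':ℝ) * c = a * c' := by exact_mod_cast congrArg (Int.cast : ℤ → ℝ) (by omega : a' * c = a * c')
  have haR : (a:ℝ) ≠ 0 := Int.cast_ne_zero.mpr ha
  have key : (a:ℝ) * ((a':ℝ) * w^2 + b' * w + c') = 0 := by
    linear_combination (a':ℝ) * h3 + w * k1'.symm + k2'.symm
  rcases mul_eq_zero.mp key with h | h
  · exact absurd h haR
  · exact h

lemma quad_two_roots {a b c y1 y2 w : ℝ} (ha : a ≠ 0)
    (h1 : a * y1^2 + b * y1 + c = 0) (h2 : a * y2^2 + b * y2 + c = 0)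
    (hne : y1 ≠ y2) (hw : a * w^2 + b * w + c = 0) : w = y1 ∨ w = y2 := by
  have hfac : a * (y1 + y2) + b = 0 := by
    have key : (y1 - y2) * (a * (y1 + y2) + b) = 0 := by linear_combination h1 - h2
    rcases mul_eq_zero.mp key with h | h
    · exact absurd (sub_eq_zero.mp h) hne
    · exact h
  have hc : c = a * (y1 * y2) := by linear_combination h1 - y1 * hfac
  have : a * ((w - y1) * (w - y2)) = 0 := by linear_combination hw - w * hfac - hc
  rcases mul_eq_zero.mp this with h | h
  · exact absurd h ha
  · rcases mul_eq_zero.mp h with h | h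
    · left; exact sub_eq_zero.mp h
    · right; exact sub_eq_zero.mp h

/-! ### two periods of equal length are rotations of each other -/

lemma rot_of_two_periods {x : ℝ} {c d : List ℤ} (hc : IsCFPeriod x c) (hd : IsCFPeriod x d)
    (hlen : c.length = d.length) : ∃ t : ℕ, c = d.rotate t := by
  obtain ⟨hcne, N₁, h₁⟩ := hc
  obtain ⟨hdne, N₂, h₂⟩ := hd
  set k := c.length with hk
  have hk0 : 0 < k := List.length_pos_iff.mpr hcne
  have hcd : ∀ i, c.getD ((N₂ + i) % k) 0 = d.getD ((N₁ + i) % k) 0 := by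
    intro i
    have e1 := h₁ (N₂ + i)
    have e2 := h₂ (N₁ + i)
    rw [show N₁ + (N₂ + i) = N₂ + (N₁ + i) from by omega] at e1
    rw [← hlen] at e2
    rw [← e1, ← e2]
  set t := N₁ + (k - N₂ % k) with ht
  refine ⟨t, ?_⟩
  apply List.ext_getElem
  · rw [List.length_rotate]; exact hlen
  · intro j hj hj'
    have hjk : j < k := hj
    set i := j + (k - N₂ % k) with hi
    have hmod2 : N₂ % k < k := Nat.mod_lt _ hk0
    have hdvd : k ∣ (N₂ - N₂ % k + k) := by
      refine dvd_add ?_ dvd_rfl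
      exact Nat.dvd_sub_mod N₂
    obtain ⟨q, hq⟩ := hdvd
    have hidx1 : (N₂ + i) % k = j := by
      have : N₂ + i = j + k * q := by
        rw [← hq]
        have := Nat.mod_le N₂ k
        omega
      rw [this, Nat.add_mul_mod_self_left, Nat.mod_eq_of_lt hjk]
    have hidx2 : (N₁ + i) % k = (j + t) % k := by
      congr 1
      omega
    have := hcd i
    rw [hidx1, hidx2] at this
    rw [List.getElem_rotate]
    have hlt : (j + t) % d.length < d.length := Nat.mod_lt _ (by omega)
    rw [← List.getD_eq_getElem c 0 hj, ← List.getD_eq_getElem d 0 hlt, this]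
    congr 1
    rw [← hlen]

/-! ### the key lemma -/

lemma key_period (M : Mat2) (hdet : M.det = 1) (htr : |M.trace| > 2)
    (e₁ e₂ : ℝ) (h1 : Irrational e₁) (h2 : Irrational e₂) (hne : e₁ ≠ e₂)
    (l₁ l₂ : ℝ)
    (hv1 : (M.map (Int.cast : ℤ → ℝ)).mulVec ![1, e₁] = l₁ • ![1, e₁])
    (hv2 : (M.map (Int.cast : ℤ → ℝ)).mulVec ![1, e₂] = l₂ • ![1, e₂])
    (b₁ : List ℤ) (hb₁ : IsCFPeriod e₁ b₁) :
    ∃ r : ℕ, IsCFPeriod e₂ (b₁.reverse.rotate r) := by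
  -- the quadratic equations satisfied by e₁ and e₂
  have hq1 : (M 0 1 : ℝ) * e₁^2 + ((M 0 0 - M 1 1 : ℤ) : ℝ) * e₁ + ((-(M 1 0) : ℤ) : ℝ) = 0 := by
    have h0 := congrFun hv1 0
    have h1' := congrFun hv1 1
    simp [Matrix.mulVec, dotProduct, Fin.sum_univ_two, Matrix.map_apply] at h0 h1'
    push_cast
    linear_combination e₁ * h0 - h1'
  have hq2 : (M 0 1 : ℝ) * e₂^2 + ((M 0 0 - M 1 1 : ℤ) : ℝ) * e₂ + ((-(M 1 0) : ℤ) : ℝ) = 0 := by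
    have h0 := congrFun hv2 0
    have h1' := congrFun hv2 1
    simp [Matrix.mulVec, dotProduct, Fin.sum_univ_two, Matrix.map_apply] at h0 h1'
    push_cast
    linear_combination e₂ * h0 - h1'
  have hM01 : M 0 1 ≠ 0 := by
    intro hz
    have hlin : ((M 0 0 - M 1 1 : ℤ) : ℝ) * e₁ + ((-(M 1 0) : ℤ) : ℝ) = 0 := by
      rw [hz] at hq1
      push_cast at hq1 ⊢
      linear_combination hq1
    obtain ⟨k1, k2⟩ := lin_eq_zero h1 hlin
    rw [Matrix.det_fin_two] at hdet
    rw [Matrix.trace_fin_two] at htr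
    have h10 : M 1 0 = 0 := by omega
    have h0011 : M 0 0 = M 1 1 := by omega
    rw [h10, hz] at hdet
    simp at hdet
    have hpm : M 0 0 = 1 ∨ M 0 0 = -1 := Int.isUnit_iff.mp (IsUnit.of_mul_eq_one _ hdet)
    have habs : M 0 0 + M 1 1 = 2 ∨ M 0 0 + M 1 1 = -2 := by omega
    rcases habs with h | h <;> rw [h] at htr <;> norm_num at htr
  -- the purely periodic tail y of e₁
  obtain ⟨N, hNpos, hdig, hposb, hygt, hyfix⟩ := tail_fixed h1 hb₁
  have hyirr : Irrational (cq e₁ N) := cq_irrational h1 N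
  set y := cq e₁ N with hy
  set C := wm ((List.range N).map (cfDigit e₁)) with hC
  have hCd : C.det ≠ 0 := wm_det_ne _
  have hCy : e₁ = act C y := cq_telescope h1 N
  set A := wm b₁ with hA
  have hbne : b₁ ≠ [] := hb₁.1
  have hAd : A.det ≠ 0 := wm_det_ne _
  obtain ⟨P1, Q1, R1, S1, PQ, RS, SUM⟩ := wm_pos b₁ hposb hbne
  have hqAy : (A 1 0 : ℝ) * y^2 + ((A 1 1 - A 0 0 : ℤ) : ℝ) * y + ((-(A 0 1) : ℤ) : ℝ) = 0 := by
    have := (fixed_iff hyirr hAd).mp hyfix.symm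
    push_cast
    linear_combination this
  -- the conjugate root y' in (-1, 0)
  have hcont : ContinuousOn (fun t : ℝ => (A 1 0 : ℝ) * t^2 + ((A 1 1 : ℝ) - A 0 0) * t - A 0 1)
      (Set.Icc (-1 : ℝ) 0) := by
    apply Continuous.continuousOn
    fun_prop
  have hSUM' : (1:ℝ) ≤ ((A 0 0 + A 1 0 - A 0 1 - A 1 1 : ℤ) : ℝ) := by exact_mod_cast SUM
  have hQ1' : (1:ℝ) ≤ ((A 0 1 : ℤ) : ℝ) := by exact_mod_cast Q1
  have hfneg : (A 1 0 : ℝ) * (-1:ℝ)^2 + ((A 1 1 : ℝ) - A 0 0) * (-1) - A 0 1 > 0 := by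
    push_cast at hSUM'
    nlinarith
  have hfzero : (A 1 0 : ℝ) * (0:ℝ)^2 + ((A 1 1 : ℝ) - A 0 0) * 0 - A 0 1 < 0 := by
    push_cast at hQ1'
    nlinarith
  obtain ⟨y', hy'mem, hy'root⟩ := intermediate_value_Ioo' (by norm_num : (-1:ℝ) ≤ 0) hcont
    ⟨hfzero, hfneg⟩
  have hy'neg : y' < 0 := hy'mem.2
  have hy'gt : -1 < y' := hy'mem.1
  have hyy' : y ≠ y' := by intro h; rw [h] at hygt; linarith
  have hqAy' : (A 1 0 : ℝ) * y'^2 + ((A 1 1 - A 0 0 : ℤ) : ℝ) * y' + ((-(A 0 1) : ℤ) : ℝ) = 0 := by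
    push_cast
    linear_combination hy'root
  -- the conjugated matrix N' fixes e₂
  set N' := C * A * C.adjugate with hN'
  have hCAd : (C * A).det ≠ 0 := by rw [Matrix.det_mul]; exact mul_ne_zero hCd hAd
  have hN'd : N'.det ≠ 0 := by
    rw [hN', Matrix.det_mul]
    exact mul_ne_zero hCAd (adj_det_ne hCd)
  have hadj1 : act C.adjugate e₁ = y := by rw [hCy]; exact act_adj_left hyirr hCd
  have hN'act : ∀ z : ℝ, Irrational z → act N' z = act C (act A (act C.adjugate z)) := by
    intro z hz
    rw [hN', act_mul hz hCAd (adj_det_ne hCd),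
      act_mul (act_irrational hz (adj_det_ne hCd)) hCd hAd]
  have hfix1 : act N' e₁ = e₁ := by
    rw [hN'act e₁ h1, hadj1, ← hyfix, ← hCy]
  have hq1' : (N' 1 0 : ℝ) * e₁^2 + ((N' 1 1 - N' 0 0 : ℤ) : ℝ) * e₁ + ((-(N' 0 1) : ℤ) : ℝ) = 0 := by
    have := (fixed_iff h1 hN'd).mp hfix1
    push_cast
    linear_combination this
  have hfix2 : act N' e₂ = e₂ := by
    by_cases hz : N' 1 0 = 0
    · -- N' is a scalar matrix
      have hlin : ((N' 1 1 - N' 0 0 : ℤ) : ℝ) * e₁ + ((-(N' 0 1) : ℤ) : ℝ) = 0 := by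
        rw [hz] at hq1'
        push_cast at hq1' ⊢
        linear_combination hq1'
      obtain ⟨k1, k2⟩ := lin_eq_zero h1 hlin
      have hsc : N' = (N' 0 0) • (1 : Mat2) := by
        ext i j
        fin_cases i <;> fin_cases j <;>
          simp [Matrix.smul_apply, Matrix.one_apply] <;> omega
      have hc0 : N' 0 0 ≠ 0 := by
        intro hcc
        apply hN'd
        rw [Matrix.det_fin_two, hz, hcc]
        ring
      rw [hsc]
      exact act_smul_one hc0
    · have hq2' := quad_prop h1 hM01 hz hq1 hq1' hq2
      apply (fixed_iff h2 hN'd).mpr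
      push_cast at hq2' ⊢
      linear_combination hq2'
  -- y₂ := the image of e₂ is the other fixed point of A
  set y₂ := act C.adjugate e₂ with hy₂
  have hy₂irr : Irrational y₂ := act_irrational h2 (adj_det_ne hCd)
  have hAy₂ : act A y₂ = y₂ := by
    have h5 : act C (act A y₂) = e₂ := by rw [← hN'act e₂ h2, hfix2]
    have h6 := congrArg (act C.adjugate) h5
    rw [act_adj_left (act_irrational hy₂irr hAd) hCd] at h6
    rw [h6]
  have hy₂ne : y₂ ≠ y := by
    intro heq
    apply hne
    have := congrArg (act C) heq
    rw [hy₂, act_adj_right h2 hCd] at this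
    rw [hCy, ← this]
  have hqAy₂ : (A 1 0 : ℝ) * y₂^2 + ((A 1 1 - A 0 0 : ℤ) : ℝ) * y₂ + ((-(A 0 1) : ℤ) : ℝ) = 0 := by
    have := (fixed_iff hy₂irr hAd).mp hAy₂
    push_cast
    linear_combination this
  have hA10R : (A 1 0 : ℝ) ≠ 0 := by
    have : (1:ℝ) ≤ (A 1 0 : ℝ) := by exact_mod_cast R1
    linarith
  have hy₂y' : y₂ = y' := by
    rcases quad_two_roots hA10R hqAy hqAy' hyy' hqAy₂ with h | h
    · exact absurd h hy₂ne
    · exact h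
  have hy'irr : Irrational y' := hy₂y' ▸ hy₂irr
  -- u := -1/y' is purely periodic with the reversed word
  set J : Mat2 := !![0,-1;1,0] with hJ
  have hJd : J.det ≠ 0 := by rw [hJ, Matrix.det_fin_two_of]; norm_num
  set u := act J y' with hu
  have huval : u = -(y'⁻¹) := by
    rw [hu, act]
    have : (J 0 0 : ℝ) = 0 ∧ (J 0 1 : ℝ) = -1 ∧ (J 1 0 : ℝ) = 1 ∧ (J 1 1 : ℝ) = 0 := by
      refine ⟨?_, ?_, ?_, ?_⟩ <;> rw [hJ] <;> norm_num [Matrix.cons_val_zero, Matrix.cons_val_one]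
    rw [this.1, this.2.1, this.2.2.1, this.2.2.2]
    rw [zero_mul, one_mul, add_zero, zero_add, neg_div, ← one_div]
  have hugt : 1 < u := by
    rw [huval, ← inv_neg]
    apply (one_lt_inv₀ (by linarith)).mpr
    linarith
  have huirr : Irrational u := act_irrational hy'irr hJd
  have hATd : A.transpose.det ≠ 0 := by rw [Matrix.det_transpose]; exact hAd
  have hqATu : (A.transpose 1 0 : ℝ) * u^2
      + ((A.transpose 1 1 : ℝ) - A.transpose 0 0) * u - A.transpose 0 1 = 0 := by
    rw [Matrix.transpose_apply, Matrix.transpose_apply, Matrix.transpose_apply,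
      Matrix.transpose_apply]
    have hy'ne : y' ≠ 0 := by intro h; rw [h] at hy'neg; linarith
    rw [huval]
    have h2ne : (y'^2) ≠ 0 := pow_ne_zero 2 hy'ne
    have key : y'^2 * ((A 0 1:ℝ) * (-(y'⁻¹))^2 + (((A 1 1):ℝ) - A 0 0) * (-(y'⁻¹)) - A 1 0)
        = -((A 1 0:ℝ) * y'^2 + (((A 1 1):ℝ) - (A 0 0)) * y' - A 0 1) := by
      field_simp
      ring
    have hr : (A 1 0:ℝ) * y'^2 + (((A 1 1):ℝ) - (A 0 0)) * y' - A 0 1 = 0 := by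
      push_cast at hqAy'
      linear_combination hqAy'
    rw [hr, neg_zero] at key
    exact (mul_eq_zero.mp key).resolve_left h2ne
  have hATfix : act A.transpose u = u := (fixed_iff huirr hATd).mpr hqATu
  have hwmrev : wm b₁.reverse = A.transpose := wm_reverse b₁
  have hufix : u = act (wm b₁.reverse) u := by rw [hwmrev]; exact hATfix.symm
  have hrevpos : ∀ a ∈ b₁.reverse, 1 ≤ a := fun a ha => hposb a (List.mem_reverse.mp ha)
  have hrevne : b₁.reverse ≠ [] := by
    intro h
    exact hbne (List.reverse_eq_nil_iff.mp h)
  have hudig := pure_periodic hugt huirr hrevpos hrevne hufix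
  -- Serret: u and e₂ have a common tail
  have hueq : u = act (J * C.adjugate) e₂ := by
    rw [act_mul h2 hJd (adj_det_ne hCd), ← hy₂, hy₂y', ← hu]
  have hdetJC : (J * C.adjugate).det = 1 ∨ (J * C.adjugate).det = -1 := by
    have hJ1 : J.det = 1 := by rw [hJ, Matrix.det_fin_two_of]; norm_num
    have : C.adjugate.det = C.det := by
      rw [Matrix.det_adjugate]
      norm_num
    rw [Matrix.det_mul, hJ1, one_mul, this]
    rw [hC]
    exact wm_det_pm _
  have hrel : relCF u e₂ := by
    rw [hueq]
    exact rel_act hdetJC h2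
  obtain ⟨n, m, hnm⟩ := hrel
  -- assemble the period of e₂
  set k := b₁.reverse.length with hk
  have hk0 : 0 < k := List.length_pos_iff.mpr hrevne
  refine ⟨n % k, ?_, m, ?_⟩
  · intro h
    apply hrevne
    have := congrArg List.length h
    rw [List.length_rotate] at this
    exact List.length_eq_zero_iff.mp this
  · intro i
    have hlen : (b₁.reverse.rotate (n % k)).length = k := by rw [List.length_rotate]
    have lhs : cfDigit e₂ (m + i) = b₁.reverse.getD ((n + i) % k) 0 := by
      rw [← cfDigit_add, ← hnm, cfDigit_add]
      exact hudig (n + i)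
    have hmlt : i % k < k := Nat.mod_lt _ hk0
    have hrot : (b₁.reverse.rotate (n % k)).getD (i % (b₁.reverse.rotate (n % k)).length) 0
        = b₁.reverse.getD ((n + i) % k) 0 := by
      rw [hlen]
      have hmlt1 : i % k < (b₁.reverse.rotate (n % k)).length := by rw [hlen]; exact hmlt
      rw [List.getD_eq_getElem _ 0 hmlt1, List.getElem_rotate]
      have h2 : (i % k + n % k) % b₁.reverse.length = (n + i) % k := by
        show (i % k + n % k) % k = (n + i) % k
        rw [Nat.add_comm (i % k) (n % k), ← Nat.add_mod]
      have h4 : (i % k + n % k) % b₁.reverse.length < b₁.reverse.length := Nat.mod_lt _ hk0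
      rw [← List.getD_eq_getElem _ 0 h4, h2]
    rw [lhs, hrot]

/-- For a hyperbolic M ∈ SL(2,ℤ) with irrational eigenvector slopes e₁, e₂,
the minimal period of the continued fraction of e₁ is, as a cyclic sequence,
the reverse of that of e₂. -/
theorem eigenvector_slopes_periods_reversed
    (M : Matrix (Fin 2) (Fin 2) ℤ) (hdet : M.det = 1) (htr : |M.trace| > 2)
    (e₁ e₂ : ℝ) (h1 : Irrational e₁) (h2 : Irrational e₂) (hne : e₁ ≠ e₂)
    (l₁ l₂ : ℝ)
    (hv1 : (M.map (Int.cast : ℤ → ℝ)).mulVec ![1, e₁] = l₁ • ![1, e₁])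
    (hv2 : (M.map (Int.cast : ℤ → ℝ)).mulVec ![1, e₂] = l₂ • ![1, e₂])
    (b₁ b₂ : List ℤ) (hb₁ : IsMinCFPeriod e₁ b₁) (hb₂ : IsMinCFPeriod e₂ b₂) :
    ∃ k : ℕ, b₁.reverse = b₂.rotate k := by
  obtain ⟨r₁, h21⟩ := key_period M hdet htr e₁ e₂ h1 h2 hne l₁ l₂ hv1 hv2 b₁ hb₁.1
  obtain ⟨r₂, h12⟩ := key_period M hdet htr e₂ e₁ h2 h1 hne.symm l₂ l₁ hv2 hv1 b₂ hb₂.1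
  have hlen21 : b₂.length ≤ b₁.length := by
    have := hb₂.2 _ h21
    rwa [List.length_rotate, List.length_reverse] at this
  have hlen12 : b₁.length ≤ b₂.length := by
    have := hb₁.2 _ h12
    rwa [List.length_rotate, List.length_reverse] at this
  have hk : b₁.length = b₂.length := le_antisymm hlen12 hlen21
  obtain ⟨t, ht⟩ := rot_of_two_periods h21 hb₂.1
    (by rw [List.length_rotate, List.length_reverse, hk])
  set k := b₁.length with hkk
  have hk0 : 0 < k := List.length_pos_iff.mpr hb₁.1.1
  set s := k * (r₁ / k + 1) - r₁ with hs
  have hrid : b₁.reverse = (b₁.reverse.rotate r₁).rotate s := by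
    rw [List.rotate_rotate]
    have hdm := Nat.div_add_mod r₁ k
    have hmlt : r₁ % k < k := Nat.mod_lt _ hk0
    have hmul : k * (r₁ / k + 1) = k * (r₁ / k) + k := by ring
    have hkr : r₁ + s = k * (r₁ / k + 1) := by omega
    rw [hkr]
    have hrevlen : k = b₁.reverse.length := List.length_reverse.symm
    rw [hrevlen, List.rotate_length_mul]
  exact ⟨t + s, by rw [hrid, ht, List.rotate_rotate]⟩
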